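/- Let A and Ã be real symmetric n×n matrices. Assume A has n distinct eigenvalues and that for every eigenvector v of A one has 𝟙ᵀv ≠ 0, where 𝟙 is the all-ones vector. Suppose Q is a permutation matrix with Q A = Ã Q. Then every doubly stochastic matrix P satisfying P A = Ã P equals Q. -/

import Mathlib

open Matrix BigOperators

def IsPermMatrix {n : ℕ} (P : Matrix (Fin n) (Fin n) ℝ) : Prop :=
  (∀ i j, P i j = 0 ∨ P i j = 1) ∧ (∀ i, ∑ j, P i j = 1) ∧ (∀ j, ∑ i, P i j = 1)

def IsDoublyStochastic {n : ℕ} (P : Matrix (Fin n) (Fin n) ℝ) : Prop :=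
  (∀ i j, 0 ≤ P i j) ∧ (∀ i, ∑ j, P i j = 1) ∧ (∀ j, ∑ i, P i j = 1)

lemma perm_mul_transpose {n : ℕ} (Q : Matrix (Fin n) (Fin n) ℝ) (hQ : IsPermMatrix Q) :
    Q * Qᵀ = 1 := by
  obtain ⟨h01, hrow, hcol⟩ := hQ
  ext i k
  simp only [Matrix.mul_apply, Matrix.transpose_apply, Matrix.one_apply]
  by_cases hik : i = k
  · subst hik
    simp only [if_pos rfl]
    calc ∑ j, Q i j * Q i j = ∑ j, Q i j := by
          refine Finset.sum_congr rfl fun j _ => ?_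
          rcases h01 i j with h | h <;> simp [h]
      _ = 1 := hrow i
  · simp only [if_neg hik]
    refine Finset.sum_eq_zero fun j _ => ?_
    by_contra hne
    rcases h01 i j with h | h
    · simp [h] at hne
    rcases h01 k j with h' | h'
    · simp [h'] at hne
    have h2 : (2:ℝ) ≤ ∑ m, Q m j := by
      have hp : ({i, k} : Finset (Fin n)).sum (fun m => Q m j) = 2 := by
        rw [Finset.sum_pair hik, h, h']; norm_num
      calc (2:ℝ) = _ := hp.symm
        _ ≤ ∑ m, Q m j := Finset.sum_le_sum_of_subset_of_nonneg (Finset.subset_univ _)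
            (fun m _ _ => by rcases h01 m j with h'' | h'' <;> simp [h''])
    rw [hcol j] at h2; linarith

theorem stmt_2 {n : ℕ} (A Atil : Matrix (Fin n) (Fin n) ℝ)
    (hA : A.IsSymm) (hAt : Atil.IsSymm)
    (hdist : ∃ (lam : Fin n → ℝ) (v : Fin n → Fin n → ℝ),
      Function.Injective lam ∧ ∀ i, v i ≠ 0 ∧ A *ᵥ v i = lam i • v i)
    (hone : ∀ (v : Fin n → ℝ) (μ : ℝ), v ≠ 0 → A *ᵥ v = μ • v → ∑ i, v i ≠ 0)
    (Q : Matrix (Fin n) (Fin n) ℝ) (hQ : IsPermMatrix Q) (hQA : Q * A = Atil * Q)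
    (P : Matrix (Fin n) (Fin n) ℝ) (hPds : IsDoublyStochastic P)
    (hPA : P * A = Atil * P) : P = Q := by
  by_cases hn : n = 0
  · subst hn; ext i j; exact i.elim0
  haveI : Nonempty (Fin n) := Fin.pos_iff_nonempty.mp (Nat.pos_of_ne_zero hn)
  obtain ⟨lam, v, hinj, hv⟩ := hdist
  have hEig : ∀ i, Module.End.HasEigenvector
      (Matrix.mulVecLin A : Module.End ℝ (Fin n → ℝ)) (lam i) (v i) := fun i =>
    Module.End.hasEigenvector_iff.mpr
      ⟨Module.End.mem_eigenspace_iff.mpr (by simpa using (hv i).2), (hv i).1⟩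
  have li : LinearIndependent ℝ v :=
    Module.End.eigenvectors_linearIndependent' _ lam hinj v hEig
  let b : Module.Basis (Fin n) ℝ (Fin n → ℝ) :=
    basisOfLinearIndependentOfCardEqFinrank li (by simp [Module.finrank_fin_fun])
  have hb : ∀ i, b i = v i := fun i => by
    simp [b, coe_basisOfLinearIndependentOfCardEqFinrank]
  have hQT : IsPermMatrix Qᵀ := ⟨fun i j => hQ.1 j i, hQ.2.2, hQ.2.1⟩
  have hQQT : Q * Qᵀ = 1 := perm_mul_transpose Q hQ
  set B := Qᵀ * P with hBdef
  have hAQT : A * Qᵀ = Qᵀ * Atil := by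
    calc A * Qᵀ = Aᵀ * Qᵀ := by rw [hA]
      _ = (Q * A)ᵀ := (Matrix.transpose_mul Q A).symm
      _ = (Atil * Q)ᵀ := by rw [hQA]
      _ = Qᵀ * Atilᵀ := Matrix.transpose_mul _ _
      _ = Qᵀ * Atil := by rw [hAt]
  have hcomm : A * B = B * A := by
    calc A * B = A * Qᵀ * P := by rw [hBdef, Matrix.mul_assoc]
      _ = Qᵀ * Atil * P := by rw [hAQT]
      _ = Qᵀ * (Atil * P) := Matrix.mul_assoc _ _ _
      _ = Qᵀ * (P * A) := by rw [hPA]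
      _ = B * A := by rw [hBdef, Matrix.mul_assoc]
  -- coordinates of A *ᵥ x
  have hAx : ∀ x : Fin n → ℝ, A *ᵥ x = ∑ i, (lam i * b.repr x i) • b i := by
    intro x
    conv_lhs => rw [← b.sum_repr x]
    have : A *ᵥ (∑ i, b.repr x i • b i)
        = (Matrix.mulVecLin A) (∑ i, b.repr x i • b i) := rfl
    rw [this, map_sum]
    refine Finset.sum_congr rfl fun i _ => ?_
    rw [_root_.map_smul, Matrix.mulVecLin_apply, hb i, (hv i).2, smul_smul, mul_comm]
  have hreprA : ∀ (x : Fin n → ℝ) (j : Fin n),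
      b.repr (A *ᵥ x) j = lam j * b.repr x j := by
    intro x j
    rw [hAx x]
    have := b.repr_sum_self (fun i => lam i * b.repr x i)
    rw [this]
  -- B maps eigenvectors to multiples
  have hBeig : ∀ i, A *ᵥ (B *ᵥ v i) = lam i • (B *ᵥ v i) := by
    intro i
    rw [Matrix.mulVec_mulVec, hcomm, ← Matrix.mulVec_mulVec, (hv i).2, Matrix.mulVec_smul]
  have hcoord : ∀ i j, j ≠ i → b.repr (B *ᵥ v i) j = 0 := by
    intro i j hij
    have h1 := hreprA (B *ᵥ v i) j
    rw [hBeig i, _root_.map_smul] at h1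
    have h2 : lam i * b.repr (B *ᵥ v i) j = lam j * b.repr (B *ᵥ v i) j := by
      simpa using h1
    have h3 : (lam i - lam j) * b.repr (B *ᵥ v i) j = 0 := by
      rw [sub_mul, h2, sub_self]
    rcases mul_eq_zero.mp h3 with h4 | h4
    · exact absurd (hinj (by linarith : lam i = lam j)).symm hij
    · exact h4
  have hBv : ∀ i, B *ᵥ v i = (b.repr (B *ᵥ v i) i) • v i := by
    intro i
    conv_lhs => rw [← b.sum_repr (B *ᵥ v i)]
    rw [Finset.sum_eq_single i]
    · rw [hb]
    · intro j _ hj; rw [hcoord i j hj, zero_smul]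
    · intro h; exact absurd (Finset.mem_univ i) h
  -- orthogonality
  have horth : ∀ i j, i ≠ j → v i ⬝ᵥ v j = 0 := by
    intro i j hij
    have h1 : (A *ᵥ v i) ⬝ᵥ v j = v i ⬝ᵥ (A *ᵥ v j) := by
      rw [Matrix.dotProduct_mulVec, ← Matrix.mulVec_transpose, hA]
    rw [(hv i).2, (hv j).2, smul_dotProduct, dotProduct_smul,
      smul_eq_mul, smul_eq_mul] at h1
    have h3 : (lam i - lam j) * (v i ⬝ᵥ v j) = 0 := by rw [sub_mul, h1, sub_self]
    rcases mul_eq_zero.mp h3 with h4 | h4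
    · exact absurd (hinj (by linarith : lam i = lam j)) hij
    · exact h4
  -- B fixes the all-ones vector
  have hBone : B *ᵥ (fun _ => (1:ℝ)) = fun _ => (1:ℝ) := by
    have hP1 : P *ᵥ (fun _ => (1:ℝ)) = fun _ => (1:ℝ) := by
      ext i; simp [Matrix.mulVec, dotProduct, hPds.2.1 i]
    have hQ1 : Qᵀ *ᵥ (fun _ => (1:ℝ)) = fun _ => (1:ℝ) := by
      ext i; simp [Matrix.mulVec, dotProduct, Matrix.transpose_apply, hQ.2.2 i]
    rw [hBdef, ← Matrix.mulVec_mulVec, hP1, hQ1]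
  -- the coefficients of 𝟙 are nonzero
  set e : Fin n → ℝ := fun _ => 1 with he
  have hanz : ∀ j, b.repr e j ≠ 0 := by
    intro j
    have hdot : v j ⬝ᵥ e = b.repr e j * (v j ⬝ᵥ v j) := by
      conv_lhs => rw [← b.sum_repr e]
      rw [show v j ⬝ᵥ (∑ i, b.repr e i • b i) = ∑ i, v j ⬝ᵥ (b.repr e i • b i) by
        simp [dotProduct, Finset.mul_sum, Finset.sum_apply]
        exact Finset.sum_comm]
      rw [Finset.sum_eq_single j]
      · rw [hb, dotProduct_smul, smul_eq_mul]
      · intro k _ hk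
        rw [hb, dotProduct_smul, smul_eq_mul, horth j k (Ne.symm hk), mul_zero]
      · intro h; exact absurd (Finset.mem_univ j) h
    have hne : v j ⬝ᵥ e ≠ 0 := by
      have := hone (v j) (lam j) (hv j).1 (hv j).2
      simpa [dotProduct, he] using this
    intro hc
    rw [hdot, hc, zero_mul] at hne
    exact hne rfl
  obtain ⟨d, hd⟩ : ∃ d : Fin n → ℝ, ∀ j, B *ᵥ v j = d j • v j :=
    ⟨fun j => b.repr (B *ᵥ v j) j, hBv⟩
  -- coefficients equal to one
  have hc1 : ∀ i, d i = 1 := by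
    intro i
    have hBe : B *ᵥ e = ∑ j, (b.repr e j * d j) • b j := by
      conv_lhs => rw [← b.sum_repr e]
      have : B *ᵥ (∑ j, b.repr e j • b j)
          = (Matrix.mulVecLin B) (∑ j, b.repr e j • b j) := rfl
      rw [this, map_sum]
      refine Finset.sum_congr rfl fun j _ => ?_
      rw [_root_.map_smul, Matrix.mulVecLin_apply, hb j, hd j, smul_smul]
    have hr : b.repr (B *ᵥ e) i = b.repr e i * d i := by
      rw [hBe]
      have := b.repr_sum_self (fun j => b.repr e j * d j)
      rw [this]
    rw [hBone] at hr
    have : b.repr e i = b.repr e i * d i := hr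
    field_simp [hanz i] at this
    linarith [this]
  -- B is the identity
  have hB1 : B = 1 := by
    have hfix : ∀ x : Fin n → ℝ, B *ᵥ x = x := by
      intro x
      conv_lhs => rw [← b.sum_repr x]
      have : B *ᵥ (∑ j, b.repr x j • b j)
          = (Matrix.mulVecLin B) (∑ j, b.repr x j • b j) := rfl
      rw [this, map_sum]
      conv_rhs => rw [← b.sum_repr x]
      refine Finset.sum_congr rfl fun j _ => ?_
      rw [_root_.map_smul, Matrix.mulVecLin_apply, hb j, hd j, hc1 j, one_smul]
    ext i j
    have := congrFun (hfix (Pi.single j 1)) i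
    rw [Matrix.mulVec_single] at this
    simp only [MulOpposite.op_one, one_smul, Matrix.col_apply] at this
    rw [this, Matrix.one_apply]
    simp [Pi.single_apply, eq_comm]
  calc P = 1 * P := (Matrix.one_mul P).symm
    _ = Q * Qᵀ * P := by rw [hQQT]
    _ = Q * B := by rw [Matrix.mul_assoc, hBdef]
    _ = Q := by rw [hB1, Matrix.mul_one]
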